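/- In an extended partition hierarchy of height h in which every zone record has at most two partition records (so each zone record has a fingerprint, namely the sequence of status flags from {operable, in-progress} along its ancestor chain of zone records), the following holds: if a tree node v occurs in two distinct zone records R ≠ R' at the same level in the extended partition hierarchy, then the fingerprints of R and R' are different; consequently, each tree node occurs in at most 2^h zone records of the extended hierarchy. -/

import Mathlib

/-- Status flags of partition records. -/
inductive Status : Type where
  | operable
  | inProgress
deriving DecidableEq

/-- Extended partition hierarchies: a zone record holds a zone and a list of child
zone records, each tagged with the status of the (at most two, one per status)
partition record it belongs to. -/
inductive ERec : Type where
  | base : Set (List ℕ) → ERec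
  | step : Set (List ℕ) → List (Status × ERec) → ERec

namespace ERec

def zoneOf : ERec → Set (List ℕ)
  | .base S => S
  | .step S _ => S

/-- Validity of an extended partition hierarchy of height `ℓ`: the zones of child
records are contained in the parent zone, and for each status the child records
with that status (i.e., the records of one partition record) have pairwise
disjoint zones; there are at most two partition records since there are exactly
two statuses. -/
inductive EValid : ℕ → ERec → Prop where
  | base : ∀ S, EValid 1 (ERec.base S)
  | step : ∀ (ℓ : ℕ) (S : Set (List ℕ)) (children : List (Status × ERec)),
      (∀ c ∈ children, zoneOf c.2 ⊆ S) →
      (∀ st : Status,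
        ((children.filter (fun c => decide (c.1 = st))).map (fun c => zoneOf c.2)).Pairwise
          (fun A B => Disjoint A B)) →
      (∀ c ∈ children, EValid ℓ c.2) →
      EValid (ℓ + 1) (ERec.step S children)

open Classical in
/-- The list of fingerprints (status sequences along the ancestor chain) of all
zone records of the extended hierarchy that contain the node `v`.  The length of a
fingerprint determines the level of the corresponding record. -/
noncomputable def fprints (v : List ℕ) : ERec → List (List Status)
  | .base S => if v ∈ S then [[]] else []
  | .step S children =>
      (if v ∈ S then [[]] else []) ++
      (children.attach.map (fun c => (fprints v c.1.2).map (fun fp => c.1.1 :: fp))).flatten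
  decreasing_by
    have h1 := List.sizeOf_lt_of_mem c.2
    obtain ⟨⟨st, r⟩, hmem⟩ := c
    simp_wf
    simp only [Prod.mk.sizeOf_spec] at h1
    omega

end ERec

open ERec in
/-- All status lists of length `< n`. -/
def allFP : ℕ → List (List Status)
  | 0 => []
  | n + 1 =>
      [] :: ((allFP n).map (Status.operable :: ·) ++ (allFP n).map (Status.inProgress :: ·))

theorem allFP_length : ∀ n : ℕ, (allFP n).length = 2 ^ n - 1
  | 0 => rfl
  | n + 1 => by
    have h1 : 1 ≤ 2 ^ n := Nat.one_le_two_pow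
    simp [allFP, allFP_length n, pow_succ]
    omega

open ERec in
theorem fprints_main (v : List ℕ) : ∀ {ℓ : ℕ} {r : ERec}, EValid ℓ r →
    (fprints v r).Nodup ∧ (∀ fp ∈ fprints v r, fp ∈ allFP ℓ) ∧
      (fprints v r ≠ [] → v ∈ zoneOf r) := by
  intro ℓ r hv
  induction hv with
  | base S =>
      by_cases hvS : v ∈ S <;> simp [fprints, hvS, allFP, zoneOf]
  | step ℓ S children hsub hdisj hchild ih =>
      classical
      -- rewrite the attach-map as a plain map
      have hrw : fprints v (ERec.step S children) =
          (if v ∈ S then [[]] else []) ++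
            (children.map (fun c => (fprints v c.2).map (fun fp => c.1 :: fp))).flatten := by
        rw [fprints]
        congr 1
        congr 1
        exact List.attach_map_val (l := children) (f := fun c => (fprints v c.2).map (fun fp => c.1 :: fp))
      set G : Status × ERec → List (List Status) :=
        fun c => (fprints v c.2).map (fun fp => c.1 :: fp) with hG
      -- pairwise disjointness of zones of same-status children
      have hpair : ∀ st : Status, children.Pairwise
          (fun c c' => c.1 = st → c'.1 = st → Disjoint (zoneOf c.2) (zoneOf c'.2)) := by
        intro st
        have := hdisj st
        rw [List.pairwise_map, List.pairwise_filter] at this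
        exact this.imp (fun h h1 h2 => h (decide_eq_true h1) (decide_eq_true h2))
      have hpair2 : children.Pairwise
          (fun c c' => c.1 = c'.1 → Disjoint (zoneOf c.2) (zoneOf c'.2)) := by
        refine ((hpair .operable).and (hpair .inProgress)).imp ?_
        rintro a b ⟨h1, h2⟩ hab
        cases hst : a.1 with
        | operable => exact h1 hst (hab ▸ hst)
        | inProgress => exact h2 hst (hab ▸ hst)
      -- lists G c for distinct children are disjoint
      have hGdisj : children.Pairwise (fun c c' => (G c).Disjoint (G c')) := by
        refine hpair2.imp_of_mem ?_
        intro a b ha hb hR x hxa hxb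
        simp only [hG, List.mem_map] at hxa hxb
        obtain ⟨fa, hfa, hxa⟩ := hxa
        obtain ⟨fb, hfb, hxb⟩ := hxb
        have hhead : a.1 = b.1 := by
          have := hxa.trans hxb.symm
          exact (List.cons.injEq _ _ _ _ ▸ this).1
        have hva : v ∈ zoneOf a.2 :=
          (ih a ha).2.2 (by intro hnil; rw [hnil] at hfa; exact (List.not_mem_nil hfa))
        have hvb : v ∈ zoneOf b.2 :=
          (ih b hb).2.2 (by intro hnil; rw [hnil] at hfb; exact (List.not_mem_nil hfb))
        exact Set.disjoint_left.1 (hR hhead) hva hvb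
      have hflat : (children.map G).flatten.Nodup := by
        rw [List.nodup_flatten]
        constructor
        · intro l hl
          obtain ⟨c, hc, rfl⟩ := List.mem_map.1 hl
          exact ((ih c hc).1).map (fun x y hxy => (List.cons.injEq _ _ _ _ ▸ hxy).2)
        · rw [List.pairwise_map]
          exact hGdisj
      refine ⟨?_, ?_, ?_⟩
      · rw [hrw]
        by_cases hvS : v ∈ S
        · simp only [hvS, if_true]
          refine List.Nodup.append (by simp) hflat ?_
          intro x hx hflat'
          simp only [List.mem_singleton] at hx
          subst hx
          obtain ⟨l, hl, hxl⟩ := List.mem_flatten.1 hflat'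
          obtain ⟨c, hc, rfl⟩ := List.mem_map.1 hl
          obtain ⟨fp, _, habs⟩ := List.mem_map.1 hxl
          simp at habs
        · simpa [hvS] using hflat
      · intro fp hfp
        rw [hrw] at hfp
        rcases List.mem_append.1 hfp with hfp | hfp
        · have : fp = [] := by
            by_cases hvS : v ∈ S <;> simp [hvS] at hfp
            exact hfp
          subst this
          simp [allFP]
        · obtain ⟨l, hl, hxl⟩ := List.mem_flatten.1 hfp
          obtain ⟨c, hc, rfl⟩ := List.mem_map.1 hl
          obtain ⟨fp', hfp', rfl⟩ := List.mem_map.1 hxl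
          have hmem := (ih c hc).2.1 fp' hfp'
          cases hst : c.1 with
          | operable => simp [allFP, hst]; exact hmem
          | inProgress => simp [allFP, hst]; exact hmem
      · intro hne
        rw [hrw] at hne
        by_cases hvS : v ∈ S
        · exact hvS
        · simp only [hvS, if_false, List.nil_append] at hne
          obtain ⟨x, hx⟩ := List.exists_mem_of_ne_nil _ hne
          obtain ⟨l, hl, hxl⟩ := List.mem_flatten.1 hx
          obtain ⟨c, hc, rfl⟩ := List.mem_map.1 hl
          obtain ⟨fp', hfp', rfl⟩ := List.mem_map.1 hxl
          have hva : v ∈ zoneOf c.2 :=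
            (ih c hc).2.2 (by intro hnil; rw [hnil] at hfp'; exact (List.not_mem_nil hfp'))
          exact hsub c hc hva

open ERec in
/-- in a valid extended partition hierarchy of height `h`, any two
distinct zone records containing the same tree node `v` have distinct fingerprints
(the fingerprint list of `v` has no duplicates); consequently, `v` occurs in at
most `2^h` zone records of the extended hierarchy. -/
theorem fingerprints_distinct (h : ℕ) (H : ERec) (hvalid : EValid h H)
    (v : List ℕ) :
    (fprints v H).Nodup ∧ (fprints v H).length ≤ 2 ^ h := by
  obtain ⟨hnd, hmem, -⟩ := fprints_main v hvalid
  refine ⟨hnd, ?_⟩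
  calc (fprints v H).length ≤ (allFP h).length :=
        (List.subperm_of_subset hnd hmem).length_le
    _ = 2 ^ h - 1 := allFP_length h
    _ ≤ 2 ^ h := Nat.sub_le _ _
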